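/- Let f₀ : ℝ³ × ℝ³ → [0,∞) be measurable with finite mass, inertia, energy, and entropy: ∬ f₀ (1 + p₀|x|² + p₀ + |ln f₀|) dx dp < ∞. Suppose f : [0,T] → L¹ is nonnegative with nonincreasing H-function H(t) = ∬ f ln f dx dp ≤ H(0), conserved energy ∬ f p₀ dx dp = ∬ f₀ p₀ dx dp, and second-moment bound ∬ f(t) p₀(x − tp/p₀)² dx dp ≤ ∬ f₀(p₀|x|² + T²) dx dp for t ∈ [0,T]. Then sup_{0≤t≤T} ∬ f(t) |ln f(t)| dx dp ≤ ∬ f₀ [2T² + 2p₀(1+|x|²) + |ln f₀|] dx dp + C₁, where C₁ is the absolute Gaussian-tail constant. -/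

import Mathlib

open MeasureTheory Real Set

noncomputable def energy (p : EuclideanSpace ℝ (Fin 3)) : ℝ := Real.sqrt (1 + ‖p‖ ^ 2)


lemma one_le_energy (p : EuclideanSpace ℝ (Fin 3)) : 1 ≤ energy p := by
  have : (1:ℝ) = Real.sqrt 1 := Real.sqrt_one.symm
  rw [this, energy]
  exact Real.sqrt_le_sqrt (by nlinarith [sq_nonneg ‖p‖])

lemma energy_pos (p : EuclideanSpace ℝ (Fin 3)) : 0 < energy p :=
  lt_of_lt_of_le one_pos (one_le_energy p)

lemma norm_le_energy (p : EuclideanSpace ℝ (Fin 3)) : ‖p‖ ≤ energy p := by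
  have : ‖p‖ = Real.sqrt (‖p‖ ^ 2) := (Real.sqrt_sq (norm_nonneg p)).symm
  rw [this, energy]
  exact Real.sqrt_le_sqrt (by linarith)

lemma energy_continuous : Continuous energy :=
  Real.continuous_sqrt.comp (continuous_const.add (continuous_norm.pow 2))

lemma log_le_div_e {u : ℝ} (hu : 0 < u) : Real.log u ≤ u / Real.exp 1 := by
  have h := Real.log_le_sub_one_of_pos (show 0 < u / Real.exp 1 by positivity)
  rw [Real.log_div (ne_of_gt hu) (Real.exp_ne_zero 1), Real.log_exp] at h
  linarith

lemma abs_split (a : ℝ) : |a| = a + 2 * max (-a) 0 := by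
  rcases le_total 0 a with h | h
  · rw [abs_of_nonneg h, max_eq_right (by linarith)]; ring
  · rw [abs_of_nonpos h, max_eq_left (by linarith)]; ring

lemma entropy_pointwise {s w : ℝ} (hs : 0 ≤ s) (hw : 0 ≤ w) :
    s * max (-Real.log s) 0 ≤ s * w + 2 / Real.exp 1 * Real.exp (-(w / 2)) := by
  rcases eq_or_lt_of_le hs with h | h
  · rw [← h]; simp; positivity
  rcases le_or_gt (Real.exp (-w)) s with hle | hlt
  · have h1 : -Real.log s ≤ w := by
      have := Real.log_le_log (Real.exp_pos (-w)) hle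
      rw [Real.log_exp] at this; linarith
    have h2 : max (-Real.log s) 0 ≤ w := max_le h1 hw
    calc s * max (-Real.log s) 0 ≤ s * w := mul_le_mul_of_nonneg_left h2 hs
      _ ≤ _ := le_add_of_nonneg_right (by positivity)
  · have hs1 : s < 1 := lt_of_lt_of_le hlt (Real.exp_le_one_iff.mpr (by linarith))
    have hlog : Real.log s < 0 := Real.log_neg h hs1
    have hmax : max (-Real.log s) 0 = -Real.log s := max_eq_left (by linarith)
    have hsq : 0 < Real.sqrt s := Real.sqrt_pos.mpr h
    have key : s * (-Real.log s) ≤ 2 / Real.exp 1 * Real.sqrt s := by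
      have hls : Real.log s = 2 * Real.log (Real.sqrt s) := by
        rw [Real.log_sqrt hs]; ring
      have h2 : Real.log (Real.sqrt s)⁻¹ ≤ (Real.sqrt s)⁻¹ / Real.exp 1 :=
        log_le_div_e (by positivity)
      rw [Real.log_inv] at h2
      have hss : s * (Real.sqrt s)⁻¹ = Real.sqrt s := by
        rw [← Real.mul_self_sqrt hs]
        field_simp
        rw [Real.sqrt_sq hsq.le]
      calc s * (-Real.log s) = 2 * (s * (-Real.log (Real.sqrt s))) := by rw [hls]; ring
        _ ≤ 2 * (s * ((Real.sqrt s)⁻¹ / Real.exp 1)) := by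
            apply mul_le_mul_of_nonneg_left _ (by norm_num)
            exact mul_le_mul_of_nonneg_left h2 hs
        _ = 2 / Real.exp 1 * (s * (Real.sqrt s)⁻¹) := by ring
        _ = 2 / Real.exp 1 * Real.sqrt s := by rw [hss]
    have hsw : Real.sqrt s ≤ Real.exp (-(w / 2)) := by
      have : Real.sqrt s ≤ Real.sqrt (Real.exp (-w)) := Real.sqrt_le_sqrt hlt.le
      rwa [← Real.exp_half, show -w / 2 = -(w/2) by ring] at this
    calc s * max (-Real.log s) 0 = s * (-Real.log s) := by rw [hmax]
      _ ≤ 2 / Real.exp 1 * Real.sqrt s := key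
      _ ≤ 2 / Real.exp 1 * Real.exp (-(w / 2)) := by
          apply mul_le_mul_of_nonneg_left hsw (by positivity)
      _ ≤ _ := le_add_of_nonneg_left (by positivity)

lemma int_exp_abs {c : ℝ} (hc : 0 < c) :
    Integrable (fun x : ℝ => Real.exp (-(c * |x|))) := by
  have h1 : IntegrableOn (fun x : ℝ => Real.exp (-(c * |x|))) (Ioi 0) := by
    refine (exp_neg_integrableOn_Ioi 0 hc).congr_fun (fun x hx => ?_) measurableSet_Ioi
    rw [abs_of_pos hx]; ring_nf
  have h2 : IntegrableOn (fun x : ℝ => Real.exp (-(c * |x|))) (Iic 0) := by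
    rw [← Measure.map_neg_eq_self (volume : Measure ℝ)]
    have m : MeasurableEmbedding fun x : ℝ => -x :=
      (Homeomorph.neg ℝ).measurableEmbedding
    rw [m.integrableOn_map_iff]
    simp_rw [Function.comp_def, abs_neg, neg_preimage, neg_Iic, neg_zero]
    exact (integrableOn_Ici_iff_integrableOn_Ioi).mpr h1
  have h3 := h2.union h1
  rwa [Set.Iic_union_Ioi, integrableOn_univ] at h3

lemma coord_le_norm (p : EuclideanSpace ℝ (Fin 3)) (i : Fin 3) : |p i| ≤ ‖p‖ := by
  have h := EuclideanSpace.norm_eq p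
  have h2 : |p i| = Real.sqrt ((p i)^2) := (Real.sqrt_sq_eq_abs _).symm
  rw [h2, h]
  apply Real.sqrt_le_sqrt
  calc (p i)^2 ≤ ∑ j, (p j)^2 :=
        Finset.single_le_sum (fun j _ => sq_nonneg (p j)) (Finset.mem_univ i)
    _ = ∑ j, ‖p j‖^2 := by simp [Real.norm_eq_abs, sq_abs]

lemma intP : Integrable (fun p : EuclideanSpace ℝ (Fin 3) => Real.exp (-(‖p‖ / 2))) := by
  have hdom : Integrable
      (fun p : EuclideanSpace ℝ (Fin 3) => ∏ i : Fin 3, Real.exp (-((1/6 : ℝ) * |p i|))) := by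
    have e := (EuclideanSpace.volume_preserving_symm_measurableEquiv_toLp (Fin 3)).symm
    rw [← MeasurePreserving.integrable_comp_emb e (MeasurableEquiv.measurableEmbedding _)]
    have h : Integrable (fun v : Fin 3 → ℝ => ∏ i : Fin 3, Real.exp (-((1/6 : ℝ) * |v i|))) :=
      MeasureTheory.Integrable.fintype_prod (f := fun _ (x : ℝ) => Real.exp (-((1/6:ℝ) * |x|)))
        (fun _ => int_exp_abs (by norm_num))
    apply h.congr
    filter_upwards with v
    simp [Function.comp_def, MeasurableEquiv.coe_toLp]
  apply hdom.mono'
  · apply Continuous.aestronglyMeasurable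
    continuity
  · filter_upwards with p
    rw [Real.norm_eq_abs, abs_of_pos (Real.exp_pos _)]
    have h1 : ∑ i : Fin 3, (1/6 : ℝ) * |p i| ≤ ‖p‖ / 2 := by
      have := fun i => coord_le_norm p i
      have h3 : ∑ i : Fin 3, (1/6 : ℝ) * |p i| ≤ ∑ _i : Fin 3, (1/6 : ℝ) * ‖p‖ :=
        Finset.sum_le_sum (fun i _ => by nlinarith [this i])
      simp only [Finset.sum_const, Finset.card_univ, Fintype.card_fin, nsmul_eq_mul] at h3
      linarith
    calc Real.exp (-(‖p‖ / 2)) ≤ Real.exp (-(∑ i : Fin 3, (1/6 : ℝ) * |p i|)) := by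
          apply Real.exp_le_exp.mpr; linarith
      _ = ∏ i : Fin 3, Real.exp (-((1/6 : ℝ) * |p i|)) := by
          rw [← Real.exp_sum]; congr 1; rw [← Finset.sum_neg_distrib]

lemma intG : Integrable (fun x : EuclideanSpace ℝ (Fin 3) => Real.exp (-(‖x‖^2 / 2))) := by
  have e := (EuclideanSpace.volume_preserving_symm_measurableEquiv_toLp (Fin 3)).symm
  rw [← MeasurePreserving.integrable_comp_emb e (MeasurableEquiv.measurableEmbedding _)]
  have h : Integrable (fun v : Fin 3 → ℝ => ∏ i : Fin 3, Real.exp (-((1/2 : ℝ) * (v i)^2))) :=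
    MeasureTheory.Integrable.fintype_prod (f := fun _ (x : ℝ) => Real.exp (-((1/2:ℝ) * x^2)))
      (fun _ => by simpa using integrable_exp_neg_mul_sq (by norm_num : (0:ℝ) < 1/2))
  apply h.congr
  filter_upwards with v
  simp only [Function.comp_apply]
  rw [← Real.exp_sum]
  congr 1
  have hn : ‖(MeasurableEquiv.toLp 2 (Fin 3 → ℝ)).symm.symm v‖^2 = ∑ i, (v i)^2 := by
    rw [EuclideanSpace.norm_eq, Real.sq_sqrt (Finset.sum_nonneg fun i _ => by positivity)]
    simp [MeasurableEquiv.coe_toLp, Real.norm_eq_abs, sq_abs]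
  rw [hn, Finset.sum_div, ← Finset.sum_neg_distrib]
  exact Finset.sum_congr rfl (fun i _ => by ring)

noncomputable def Gc : ℝ := ∫ x : EuclideanSpace ℝ (Fin 3), Real.exp (-(‖x‖^2 / 2))
noncomputable def Pc : ℝ := ∫ p : EuclideanSpace ℝ (Fin 3), Real.exp (-(‖p‖ / 2))

lemma int_h (t : ℝ) :
    Integrable (fun z : EuclideanSpace ℝ (Fin 3) × EuclideanSpace ℝ (Fin 3) =>
      Real.exp (-(‖z.1 - t • ((energy z.2)⁻¹ • z.2)‖^2 / 2)) * Real.exp (-(‖z.2‖ / 2)))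
    ∧ (∫ z : EuclideanSpace ℝ (Fin 3) × EuclideanSpace ℝ (Fin 3),
      Real.exp (-(‖z.1 - t • ((energy z.2)⁻¹ • z.2)‖^2 / 2)) * Real.exp (-(‖z.2‖ / 2)))
      = Gc * Pc := by
  set v : EuclideanSpace ℝ (Fin 3) → EuclideanSpace ℝ (Fin 3) :=
    fun p => t • ((energy p)⁻¹ • p) with hv
  have hvcont : Continuous v :=
    ((energy_continuous.inv₀ fun p => (energy_pos p).ne').smul continuous_id).const_smul t
  have hcont : Continuous (fun z : EuclideanSpace ℝ (Fin 3) × EuclideanSpace ℝ (Fin 3) =>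
      Real.exp (-(‖z.1 - v z.2‖^2 / 2)) * Real.exp (-(‖z.2‖ / 2))) := by
    apply Continuous.mul
    · exact Real.continuous_exp.comp
        (((continuous_fst.sub (hvcont.comp continuous_snd)).norm.pow 2).div_const 2).neg
    · exact Real.continuous_exp.comp (continuous_snd.norm.div_const 2).neg
  have hnorm : ∀ p : EuclideanSpace ℝ (Fin 3),
      (∫ x : EuclideanSpace ℝ (Fin 3),
        Real.exp (-(‖x - v p‖^2 / 2)) * Real.exp (-(‖p‖ / 2))) = Gc * Real.exp (-(‖p‖ / 2)) := by
    intro p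
    rw [integral_mul_const]
    congr 1
    exact integral_sub_right_eq_self (fun x => Real.exp (-(‖x‖^2 / 2))) (v p)
  have hint : Integrable (fun z : EuclideanSpace ℝ (Fin 3) × EuclideanSpace ℝ (Fin 3) =>
      Real.exp (-(‖z.1 - v z.2‖^2 / 2)) * Real.exp (-(‖z.2‖ / 2))) := by
    rw [MeasureTheory.Measure.volume_eq_prod]
    refine (integrable_prod_iff' (hcont.aestronglyMeasurable)).mpr ⟨?_, ?_⟩
    · filter_upwards with p
      exact (intG.comp_sub_right (v p)).mul_const _
    · have heq : (fun p : EuclideanSpace ℝ (Fin 3) => ∫ x : EuclideanSpace ℝ (Fin 3),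
          ‖Real.exp (-(‖x - v p‖^2 / 2)) * Real.exp (-(‖p‖ / 2))‖)
          = fun p => Gc * Real.exp (-(‖p‖ / 2)) := by
        funext p
        rw [← hnorm p]
        congr 1
        funext x
        rw [norm_mul, Real.norm_eq_abs, Real.norm_eq_abs,
          abs_of_pos (Real.exp_pos _), abs_of_pos (Real.exp_pos _)]
      rw [heq]
      exact intP.const_mul _
  refine ⟨hint, ?_⟩
  rw [MeasureTheory.Measure.volume_eq_prod] at hint ⊢
  rw [integral_prod_symm _ hint]
  have : (fun p : EuclideanSpace ℝ (Fin 3) => ∫ x : EuclideanSpace ℝ (Fin 3),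
      Real.exp (-(‖x - v p‖^2 / 2)) * Real.exp (-(‖p‖ / 2))) = fun p => Gc * Real.exp (-(‖p‖ / 2)) := by
    funext p; exact hnorm p
  rw [this, integral_const_mul]
  rfl

lemma tail_bound (t : ℝ) :
    Integrable (fun z : EuclideanSpace ℝ (Fin 3) × EuclideanSpace ℝ (Fin 3) =>
      Real.exp (-((energy z.2 * ‖z.1 - t • ((energy z.2)⁻¹ • z.2)‖^2 + energy z.2) / 2)))
    ∧ (∫ z : EuclideanSpace ℝ (Fin 3) × EuclideanSpace ℝ (Fin 3),
      Real.exp (-((energy z.2 * ‖z.1 - t • ((energy z.2)⁻¹ • z.2)‖^2 + energy z.2) / 2)))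
      ≤ Gc * Pc := by
  obtain ⟨hint, hval⟩ := int_h t
  have hWcont : Continuous (fun z : EuclideanSpace ℝ (Fin 3) × EuclideanSpace ℝ (Fin 3) =>
      energy z.2 * ‖z.1 - t • ((energy z.2)⁻¹ • z.2)‖^2 + energy z.2) := by
    have hE : Continuous (fun z : EuclideanSpace ℝ (Fin 3) × EuclideanSpace ℝ (Fin 3) =>
        energy z.2) := energy_continuous.comp continuous_snd
    have hvcont : Continuous (fun p : EuclideanSpace ℝ (Fin 3) => t • ((energy p)⁻¹ • p)) :=
      ((energy_continuous.inv₀ fun p => (energy_pos p).ne').smul continuous_id).const_smul t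
    exact (hE.mul ((continuous_fst.sub (hvcont.comp continuous_snd)).norm.pow 2)).add hE
  have hbd : ∀ z : EuclideanSpace ℝ (Fin 3) × EuclideanSpace ℝ (Fin 3),
      Real.exp (-((energy z.2 * ‖z.1 - t • ((energy z.2)⁻¹ • z.2)‖^2 + energy z.2) / 2))
      ≤ Real.exp (-(‖z.1 - t • ((energy z.2)⁻¹ • z.2)‖^2 / 2)) * Real.exp (-(‖z.2‖ / 2)) := by
    intro z
    rw [← Real.exp_add]
    apply Real.exp_le_exp.mpr
    have h1 : ‖z.1 - t • ((energy z.2)⁻¹ • z.2)‖^2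
        ≤ energy z.2 * ‖z.1 - t • ((energy z.2)⁻¹ • z.2)‖^2 := by
      nlinarith [one_le_energy z.2, sq_nonneg ‖z.1 - t • ((energy z.2)⁻¹ • z.2)‖]
    have h2 : ‖z.2‖ ≤ energy z.2 := norm_le_energy z.2
    linarith
  have hintW : Integrable (fun z : EuclideanSpace ℝ (Fin 3) × EuclideanSpace ℝ (Fin 3) =>
      Real.exp (-((energy z.2 * ‖z.1 - t • ((energy z.2)⁻¹ • z.2)‖^2 + energy z.2) / 2))) := by
    apply hint.mono' (Real.continuous_exp.comp ((hWcont.div_const 2).neg)).aestronglyMeasurable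
    filter_upwards with z
    simp only [Real.norm_eq_abs, Function.comp_apply, Real.abs_exp]
    exact hbd z
  exact ⟨hintW, hval ▸ integral_mono hintW hint hbd⟩

/-- A priori entropy bound: there is an absolute (Gaussian-tail) constant `C₁` such
that if `f₀ ≥ 0` has finite mass, inertia, energy and entropy, and `f(t) ≥ 0` has
nonincreasing H-function, conserved energy, and the propagated second-moment bound,
then `sup_{0≤t≤T} ∬ f(t)|ln f(t)| ≤ ∬ f₀[2T² + 2p₀(1+|x|²) + |ln f₀|] + C₁`. -/
theorem stmt_17 :
    ∃ C₁ : ℝ, 0 < C₁ ∧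
      ∀ (T : ℝ), 0 ≤ T →
      ∀ (f₀ : EuclideanSpace ℝ (Fin 3) × EuclideanSpace ℝ (Fin 3) → ℝ)
        (f : ℝ → EuclideanSpace ℝ (Fin 3) × EuclideanSpace ℝ (Fin 3) → ℝ),
        Measurable f₀ → (∀ z, 0 ≤ f₀ z) →
        Integrable (fun z : EuclideanSpace ℝ (Fin 3) × EuclideanSpace ℝ (Fin 3) =>
          f₀ z * (1 + energy z.2 * ‖z.1‖ ^ 2 + energy z.2 + |Real.log (f₀ z)|)) →
        (∀ t ∈ Set.Icc (0 : ℝ) T, Measurable (f t) ∧ (∀ z, 0 ≤ f t z) ∧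
          Integrable (fun z => f t z * |Real.log (f t z)|) ∧
          Integrable (fun z : EuclideanSpace ℝ (Fin 3) × EuclideanSpace ℝ (Fin 3) =>
            f t z * (energy z.2 * ‖z.1 - t • ((energy z.2)⁻¹ • z.2)‖ ^ 2 + energy z.2))) →
        -- nonincreasing H-function
        (∀ t ∈ Set.Icc (0 : ℝ) T,
          (∫ z, f t z * Real.log (f t z)) ≤ ∫ z, f₀ z * Real.log (f₀ z)) →
        -- conserved energy
        (∀ t ∈ Set.Icc (0 : ℝ) T,
          (∫ z : EuclideanSpace ℝ (Fin 3) × EuclideanSpace ℝ (Fin 3),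
            f t z * energy z.2)
          = ∫ z : EuclideanSpace ℝ (Fin 3) × EuclideanSpace ℝ (Fin 3),
              f₀ z * energy z.2) →
        -- propagated second-moment bound
        (∀ t ∈ Set.Icc (0 : ℝ) T,
          (∫ z : EuclideanSpace ℝ (Fin 3) × EuclideanSpace ℝ (Fin 3),
            f t z * (energy z.2 * ‖z.1 - t • ((energy z.2)⁻¹ • z.2)‖ ^ 2))
          ≤ ∫ z : EuclideanSpace ℝ (Fin 3) × EuclideanSpace ℝ (Fin 3),
              f₀ z * (energy z.2 * ‖z.1‖ ^ 2 + T ^ 2)) →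
        ∀ t ∈ Set.Icc (0 : ℝ) T,
          (∫ z, f t z * |Real.log (f t z)|)
            ≤ (∫ z : EuclideanSpace ℝ (Fin 3) × EuclideanSpace ℝ (Fin 3),
                f₀ z * (2 * T ^ 2 + 2 * energy z.2 * (1 + ‖z.1‖ ^ 2) + |Real.log (f₀ z)|))
              + C₁ := by
  have hGP : 0 ≤ Gc * Pc :=
    mul_nonneg (integral_nonneg fun x => (Real.exp_pos _).le)
      (integral_nonneg fun p => (Real.exp_pos _).le)
  refine ⟨4 / Real.exp 1 * (Gc * Pc) + 1, by positivity, ?_⟩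
  intro T hT f₀ f hmf₀ hf₀pos hintf₀ hreg hH hE hM t ht
  obtain ⟨hmeas, hpos, hint1, hint2⟩ := hreg t ht
  -- measurability helpers
  have hmlog : Measurable fun z : EuclideanSpace ℝ (Fin 3) × EuclideanSpace ℝ (Fin 3) =>
      Real.log (f t z) := Real.measurable_log.comp hmeas
  have hmE : Measurable fun z : EuclideanSpace ℝ (Fin 3) × EuclideanSpace ℝ (Fin 3) =>
      energy z.2 := (energy_continuous.comp continuous_snd).measurable
  have hmA : Measurable fun z : EuclideanSpace ℝ (Fin 3) × EuclideanSpace ℝ (Fin 3) =>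
      energy z.2 * ‖z.1 - t • ((energy z.2)⁻¹ • z.2)‖ ^ 2 := by
    have hvcont : Continuous (fun p : EuclideanSpace ℝ (Fin 3) => t • ((energy p)⁻¹ • p)) :=
      ((energy_continuous.inv₀ fun p => (energy_pos p).ne').smul continuous_id).const_smul t
    exact ((energy_continuous.comp continuous_snd).mul
      ((continuous_fst.sub (hvcont.comp continuous_snd)).norm.pow 2)).measurable
  have hApos : ∀ z : EuclideanSpace ℝ (Fin 3) × EuclideanSpace ℝ (Fin 3),
      0 ≤ energy z.2 * ‖z.1 - t • ((energy z.2)⁻¹ • z.2)‖ ^ 2 :=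
    fun z => mul_nonneg (energy_pos z.2).le (sq_nonneg _)
  -- integrabilities for f t
  have ig_lnf : Integrable (fun z => f t z * Real.log (f t z)) := by
    apply hint1.mono' (hmeas.mul hmlog).aestronglyMeasurable
    filter_upwards with z
    simp only [Pi.mul_apply, Pi.add_apply, Pi.neg_apply]
    rw [Real.norm_eq_abs, abs_mul, abs_of_nonneg (hpos z)]
  have ig_neg : Integrable (fun z => f t z * max (-Real.log (f t z)) 0) := by
    apply hint1.mono' (hmeas.mul (hmlog.neg.max measurable_const)).aestronglyMeasurable
    filter_upwards with z
    simp only [Pi.mul_apply, Pi.add_apply, Pi.neg_apply]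
    rw [Real.norm_eq_abs, abs_mul, abs_of_nonneg (hpos z)]
    apply mul_le_mul_of_nonneg_left _ (hpos z)
    rw [abs_of_nonneg (le_max_right _ _)]
    exact max_le (neg_le_abs _) (abs_nonneg _)
  have ig_A : Integrable (fun z : EuclideanSpace ℝ (Fin 3) × EuclideanSpace ℝ (Fin 3) =>
      f t z * (energy z.2 * ‖z.1 - t • ((energy z.2)⁻¹ • z.2)‖ ^ 2)) := by
    apply hint2.mono' (hmeas.mul hmA).aestronglyMeasurable
    filter_upwards with z
    simp only [Pi.mul_apply, Pi.add_apply, Pi.neg_apply]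
    rw [Real.norm_eq_abs, abs_mul, abs_of_nonneg (hpos z), abs_of_nonneg (hApos z)]
    apply mul_le_mul_of_nonneg_left _ (hpos z)
    exact le_add_of_nonneg_right (energy_pos z.2).le
  have ig_E : Integrable (fun z : EuclideanSpace ℝ (Fin 3) × EuclideanSpace ℝ (Fin 3) =>
      f t z * energy z.2) := by
    apply hint2.mono' (hmeas.mul hmE).aestronglyMeasurable
    filter_upwards with z
    simp only [Pi.mul_apply, Pi.add_apply, Pi.neg_apply]
    rw [Real.norm_eq_abs, abs_mul, abs_of_nonneg (hpos z), abs_of_nonneg (energy_pos z.2).le]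
    apply mul_le_mul_of_nonneg_left _ (hpos z)
    exact le_add_of_nonneg_left (hApos z)
  -- entropy splitting identity
  have split : (∫ z, f t z * |Real.log (f t z)|)
      = (∫ z, f t z * Real.log (f t z))
        + 2 * ∫ z, f t z * max (-Real.log (f t z)) 0 := by
    have hfe : (fun z => f t z * |Real.log (f t z)|)
        = fun z => f t z * Real.log (f t z) + 2 * (f t z * max (-Real.log (f t z)) 0) := by
      funext z; rw [abs_split]; ring
    rw [hfe, integral_add ig_lnf (ig_neg.const_mul 2), integral_const_mul]
  -- bound on the negative part
  obtain ⟨itail, vtail⟩ := tail_bound t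
  have hb2 : (∫ z, f t z * max (-Real.log (f t z)) 0)
      ≤ (∫ z : EuclideanSpace ℝ (Fin 3) × EuclideanSpace ℝ (Fin 3),
          f t z * (energy z.2 * ‖z.1 - t • ((energy z.2)⁻¹ • z.2)‖ ^ 2 + energy z.2))
        + 2 / Real.exp 1 * (Gc * Pc) := by
    have step : (∫ z, f t z * max (-Real.log (f t z)) 0)
        ≤ ∫ z : EuclideanSpace ℝ (Fin 3) × EuclideanSpace ℝ (Fin 3),
            (f t z * (energy z.2 * ‖z.1 - t • ((energy z.2)⁻¹ • z.2)‖ ^ 2 + energy z.2)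
              + 2 / Real.exp 1
                * Real.exp (-((energy z.2 * ‖z.1 - t • ((energy z.2)⁻¹ • z.2)‖ ^ 2
                    + energy z.2) / 2))) := by
      apply integral_mono ig_neg (hint2.add (itail.const_mul _))
      intro z
      exact entropy_pointwise (hpos z)
        (add_nonneg (hApos z) (energy_pos z.2).le)
    rw [integral_add hint2 (itail.const_mul _), integral_const_mul] at step
    have := mul_le_mul_of_nonneg_left vtail (by positivity : (0:ℝ) ≤ 2 / Real.exp 1)
    linarith
  -- split the weight integral
  have hsplitW : (∫ z : EuclideanSpace ℝ (Fin 3) × EuclideanSpace ℝ (Fin 3),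
      f t z * (energy z.2 * ‖z.1 - t • ((energy z.2)⁻¹ • z.2)‖ ^ 2 + energy z.2))
      = (∫ z : EuclideanSpace ℝ (Fin 3) × EuclideanSpace ℝ (Fin 3),
          f t z * (energy z.2 * ‖z.1 - t • ((energy z.2)⁻¹ • z.2)‖ ^ 2))
        + ∫ z : EuclideanSpace ℝ (Fin 3) × EuclideanSpace ℝ (Fin 3),
            f t z * energy z.2 := by
    rw [← integral_add ig_A ig_E]
    congr 1; funext z; ring
  -- integrabilities for f₀
  have hmlog₀ : Measurable fun z : EuclideanSpace ℝ (Fin 3) × EuclideanSpace ℝ (Fin 3) =>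
      Real.log (f₀ z) := Real.measurable_log.comp hmf₀
  have hmX : Measurable fun z : EuclideanSpace ℝ (Fin 3) × EuclideanSpace ℝ (Fin 3) =>
      ‖z.1‖ ^ 2 := (continuous_fst.norm.pow 2).measurable
  have key₀ : ∀ z : EuclideanSpace ℝ (Fin 3) × EuclideanSpace ℝ (Fin 3),
      0 ≤ 1 + energy z.2 * ‖z.1‖ ^ 2 + energy z.2 + |Real.log (f₀ z)| := fun z => by
    have h1 := energy_pos z.2
    have h2 : (0:ℝ) ≤ energy z.2 * ‖z.1‖ ^ 2 := mul_nonneg h1.le (sq_nonneg _)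
    have h3 := abs_nonneg (Real.log (f₀ z))
    linarith
  have i0_ln : Integrable (fun z => f₀ z * Real.log (f₀ z)) := by
    apply hintf₀.mono' (hmf₀.mul hmlog₀).aestronglyMeasurable
    filter_upwards with z
    simp only [Pi.mul_apply, Pi.add_apply, Pi.neg_apply]
    rw [Real.norm_eq_abs, abs_mul, abs_of_nonneg (hf₀pos z)]
    apply mul_le_mul_of_nonneg_left _ (hf₀pos z)
    have h1 := energy_pos z.2
    have h2 : (0:ℝ) ≤ energy z.2 * ‖z.1‖ ^ 2 := mul_nonneg h1.le (sq_nonneg _)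
    linarith
  have i0_M : Integrable (fun z : EuclideanSpace ℝ (Fin 3) × EuclideanSpace ℝ (Fin 3) =>
      f₀ z * (energy z.2 * ‖z.1‖ ^ 2 + T ^ 2)) := by
    apply (hintf₀.const_mul (1 + T ^ 2)).mono'
      ((hmf₀.mul ((hmE.mul hmX).add measurable_const))).aestronglyMeasurable
    filter_upwards with z
    have h1 := energy_pos z.2
    have h2 : (0:ℝ) ≤ energy z.2 * ‖z.1‖ ^ 2 := mul_nonneg h1.le (sq_nonneg _)
    have h3 := abs_nonneg (Real.log (f₀ z))
    have h4 : (0:ℝ) ≤ T ^ 2 := sq_nonneg T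
    simp only [Pi.mul_apply, Pi.add_apply, Pi.neg_apply]
    rw [Real.norm_eq_abs, abs_mul, abs_of_nonneg (hf₀pos z), abs_of_nonneg (by linarith)]
    have h5 : energy z.2 * ‖z.1‖ ^ 2 + T ^ 2
        ≤ (1 + T ^ 2) * (1 + energy z.2 * ‖z.1‖ ^ 2 + energy z.2 + |Real.log (f₀ z)|) := by
      nlinarith
    nlinarith [hf₀pos z]
  have i0_E : Integrable (fun z : EuclideanSpace ℝ (Fin 3) × EuclideanSpace ℝ (Fin 3) =>
      f₀ z * energy z.2) := by
    apply hintf₀.mono' (hmf₀.mul hmE).aestronglyMeasurable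
    filter_upwards with z
    simp only [Pi.mul_apply, Pi.add_apply, Pi.neg_apply]
    rw [Real.norm_eq_abs, abs_mul, abs_of_nonneg (hf₀pos z),
      abs_of_nonneg (energy_pos z.2).le]
    apply mul_le_mul_of_nonneg_left _ (hf₀pos z)
    have h1 := energy_pos z.2
    have h2 : (0:ℝ) ≤ energy z.2 * ‖z.1‖ ^ 2 := mul_nonneg h1.le (sq_nonneg _)
    have h3 := abs_nonneg (Real.log (f₀ z))
    linarith
  have i0_target : Integrable (fun z : EuclideanSpace ℝ (Fin 3) × EuclideanSpace ℝ (Fin 3) =>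
      f₀ z * (2 * T ^ 2 + 2 * energy z.2 * (1 + ‖z.1‖ ^ 2) + |Real.log (f₀ z)|)) := by
    apply (hintf₀.const_mul (2 * T ^ 2 + 2)).mono'
      ((hmf₀.mul ((measurable_const.add ((hmE.const_mul 2).mul
        (measurable_const.add hmX))).add hmlog₀.abs))).aestronglyMeasurable
    filter_upwards with z
    have h1 := energy_pos z.2
    have h2 : (0:ℝ) ≤ energy z.2 * ‖z.1‖ ^ 2 := mul_nonneg h1.le (sq_nonneg _)
    have h3 := abs_nonneg (Real.log (f₀ z))
    have h4 : (0:ℝ) ≤ T ^ 2 := sq_nonneg T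
    have h5 : (0:ℝ) ≤ ‖z.1‖ ^ 2 := sq_nonneg _
    simp only [Pi.mul_apply, Pi.add_apply, Pi.neg_apply]
    rw [Real.norm_eq_abs, abs_mul, abs_of_nonneg (hf₀pos z), abs_of_nonneg (by nlinarith)]
    have h6 : 2 * T ^ 2 + 2 * energy z.2 * (1 + ‖z.1‖ ^ 2) + |Real.log (f₀ z)|
        ≤ (2 * T ^ 2 + 2) * (1 + energy z.2 * ‖z.1‖ ^ 2 + energy z.2 + |Real.log (f₀ z)|) := by
      nlinarith
    nlinarith [hf₀pos z]
  -- comparison of the f₀ integrals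
  have hcomp : (∫ z, f₀ z * Real.log (f₀ z))
      + 2 * (∫ z : EuclideanSpace ℝ (Fin 3) × EuclideanSpace ℝ (Fin 3),
          f₀ z * (energy z.2 * ‖z.1‖ ^ 2 + T ^ 2))
      + 2 * (∫ z : EuclideanSpace ℝ (Fin 3) × EuclideanSpace ℝ (Fin 3),
          f₀ z * energy z.2)
      ≤ ∫ z : EuclideanSpace ℝ (Fin 3) × EuclideanSpace ℝ (Fin 3),
          f₀ z * (2 * T ^ 2 + 2 * energy z.2 * (1 + ‖z.1‖ ^ 2) + |Real.log (f₀ z)|) := by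
    have hsum : (∫ z, f₀ z * Real.log (f₀ z))
        + 2 * (∫ z : EuclideanSpace ℝ (Fin 3) × EuclideanSpace ℝ (Fin 3),
            f₀ z * (energy z.2 * ‖z.1‖ ^ 2 + T ^ 2))
        + 2 * (∫ z : EuclideanSpace ℝ (Fin 3) × EuclideanSpace ℝ (Fin 3),
            f₀ z * energy z.2)
        = ∫ z : EuclideanSpace ℝ (Fin 3) × EuclideanSpace ℝ (Fin 3),
            (f₀ z * Real.log (f₀ z) + 2 * (f₀ z * (energy z.2 * ‖z.1‖ ^ 2 + T ^ 2))
              + 2 * (f₀ z * energy z.2)) := by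
      have h12 : Integrable (fun z : EuclideanSpace ℝ (Fin 3) × EuclideanSpace ℝ (Fin 3) =>
          f₀ z * Real.log (f₀ z) + 2 * (f₀ z * (energy z.2 * ‖z.1‖ ^ 2 + T ^ 2))) :=
        i0_ln.add (i0_M.const_mul 2)
      rw [integral_add h12 (i0_E.const_mul 2),
        integral_add i0_ln (i0_M.const_mul 2), integral_const_mul, integral_const_mul]
    rw [hsum]
    have h123 : Integrable (fun z : EuclideanSpace ℝ (Fin 3) × EuclideanSpace ℝ (Fin 3) =>
        f₀ z * Real.log (f₀ z) + 2 * (f₀ z * (energy z.2 * ‖z.1‖ ^ 2 + T ^ 2))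
          + 2 * (f₀ z * energy z.2)) :=
      (i0_ln.add (i0_M.const_mul 2)).add (i0_E.const_mul 2)
    apply integral_mono h123 i0_target
    intro z
    have h1 := mul_le_mul_of_nonneg_left (le_abs_self (Real.log (f₀ z))) (hf₀pos z)
    simp only [Pi.add_apply]
    nlinarith [hf₀pos z]
  -- conclude
  have hHt := hH t ht
  have hEt := hE t ht
  have hMt := hM t ht
  rw [split]
  rw [hsplitW] at hb2
  have h4e : 2 * (2 / Real.exp 1 * (Gc * Pc)) = 4 / Real.exp 1 * (Gc * Pc) := by ring
  linarith
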